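/- Let P be an n×n correlation with strictly positive entries, let 0 ≤ λ < 1, and suppose a density matrix σ on ℂ^d ⊗ ℂ^d together with POVMs {E_x}_{x=1}^n, {F_y}_{y=1}^n on ℂ^d generates P under depolarizing noise of strength λ. Set s_x = tr(E_x)/d and t_y = tr(F_y)/d. Then d ≥ (1/(1−λ))·( max_{x,y}{ (∑_{b=1}^n P(x,b))/s_x , (∑_{a=1}^n P(a,y))/t_y } − λ ). -/

import Mathlib

open Matrix BigOperators Finset
open scoped Kronecker ComplexOrder

noncomputable section

/-- The effect of the depolarizing channel on a measurement effect (Heisenberg picture). -/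
def noisyEffect {d : ℕ} (lam : ℝ) (E : Matrix (Fin d) (Fin d) ℂ) : Matrix (Fin d) (Fin d) ℂ :=
  ((1 - lam : ℝ) : ℂ) • E + ((lam : ℂ) * E.trace / (d : ℂ)) • (1 : Matrix (Fin d) (Fin d) ℂ)

/-- A POVM on ℂ^d with n outcomes. -/
def IsPOVM {d n : ℕ} (E : Fin n → Matrix (Fin d) (Fin d) ℂ) : Prop :=
  (∀ x, (E x).PosSemidef) ∧ ∑ x, E x = 1

/-- P is generated with local dimension d under depolarizing noise of strength lam. -/
def GeneratesWithNoise {n : ℕ} (P : Matrix (Fin n) (Fin n) ℝ) (lam : ℝ) (d : ℕ) : Prop :=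
  ∃ (σ : Matrix (Fin d × Fin d) (Fin d × Fin d) ℂ)
    (E F : Fin n → Matrix (Fin d) (Fin d) ℂ),
    σ.PosSemidef ∧ σ.trace = 1 ∧ IsPOVM E ∧ IsPOVM F ∧
    ∀ x y, (P x y : ℂ) =
      ((noisyEffect lam (E x) ⊗ₖ noisyEffect lam (F y)) * σ).trace

/-- The matrix P̂_λ^{s,t}. -/
def Phat {n : ℕ} (P : Matrix (Fin n) (Fin n) ℝ) (lam : ℝ) (s t : Fin n → ℝ)
    (x y : Fin n) : ℝ :=
  P x y - lam * s x * (∑ a, P a y) - lam * t y * (∑ b, P x b) + lam ^ 2 * s x * t y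

/-- Nonnegative rank. -/
def NonnegRank {m n : ℕ} (P : Matrix (Fin m) (Fin n) ℝ) : ℕ :=
  sInf {r : ℕ | ∃ (u : Fin r → Fin m → ℝ) (v : Fin r → Fin n → ℝ),
    (∀ i x, 0 ≤ u i x) ∧ (∀ i y, 0 ≤ v i y) ∧ ∀ x y, P x y = ∑ i, u i x * v i y}

/-- PSD rank. -/
def PsdRank {m n : ℕ} (M : Matrix (Fin m) (Fin n) ℝ) : ℕ :=
  sInf {r : ℕ | ∃ (C : Fin m → Matrix (Fin r) (Fin r) ℂ)
    (D : Fin n → Matrix (Fin r) (Fin r) ℂ),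
    (∀ x, (C x).PosSemidef) ∧ (∀ y, (D y).PosSemidef) ∧
    ∀ x y, (M x y : ℂ) = (C x * D y).trace}

def outerProj {α : Type*} [Fintype α] (ψ : α → ℂ) : Matrix α α ℂ :=
  Matrix.of fun i j => ψ i * (starRingEnd ℂ) (ψ j)

def qval (k : ℝ) : ℝ := 1 / (1 - k) - Real.sqrt (1 / (1 - k) ^ 2 - 1)

def Bmat (m : ℕ) (k : ℝ) : Matrix (Fin m) (Fin m) ℝ :=
  Matrix.of fun x y =>
    (1 / (m : ℝ) ^ 2) * (1 - k * Real.cos (2 * Real.pi * ((x.val : ℝ) + (y.val : ℝ)) / m))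

def Amat (m : ℕ) (k : ℝ) : Matrix (Fin (m + 1)) (Fin (m + 1)) ℝ :=
  Matrix.of fun x y =>
    if x.val = 0 then
      (if y.val = 0 then (1 - qval k) ^ 2 / 2 else qval k * (1 - qval k) / (2 * m))
    else if y.val = 0 then qval k * (1 - qval k) / (2 * m)
    else ((1 + (qval k) ^ 2) / 2) *
      ((1 / (m : ℝ) ^ 2) *
        (1 - k * Real.cos (2 * Real.pi * (((x.val : ℝ) - 1) + ((y.val : ℝ) - 1)) / m)))

def IsElPsdFactorization {n : ℕ} (P : Matrix (Fin n) (Fin n) ℝ) (lam : ℝ) (r : ℕ)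
    (C D : Fin n → Matrix (Fin r) (Fin r) ℂ) : Prop :=
  (∀ x, (C x).PosSemidef) ∧ (∀ y, (D y).PosSemidef) ∧
  (∀ x y, (P x y : ℂ) = (C x * D y).trace) ∧
  IsUnit (∑ k, C k) ∧ IsUnit (∑ k, D k) ∧
  (∀ x, (C x - (((lam : ℂ) / r) * (C x * (∑ k, C k)⁻¹).trace) • (∑ k, C k)).PosSemidef) ∧
  (∀ y, (D y - (((lam : ℂ) / r) * (D y * (∑ k, D k)⁻¹).trace) • (∑ k, D k)).PosSemidef)

/-! ### Auxiliary lemmas -/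

lemma myPsd_trace_nonneg {m : Type*} [Fintype m] [DecidableEq m]
    {M : Matrix m m ℂ} (hM : M.PosSemidef) : 0 ≤ M.trace := by
  rw [Matrix.trace]
  refine Finset.sum_nonneg fun i _ => ?_
  have h := hM.diag_nonneg (i := i)
  simpa [dotProduct, Pi.single_apply, Matrix.diag, Matrix.mulVec, apply_ite] using h

section
open scoped MatrixOrder
lemma myPsd_exists_conjTranspose_mul_self {m : Type*} [Fintype m] [DecidableEq m]
    {A : Matrix m m ℂ} (hA : A.PosSemidef) : ∃ X : Matrix m m ℂ, A = Xᴴ * X := by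
  obtain ⟨X, hX⟩ := CStarAlgebra.nonneg_iff_eq_star_mul_self.mp hA.nonneg
  exact ⟨X, hX⟩
end

lemma myPsd_mul_trace_nonneg {m : Type*} [Fintype m] [DecidableEq m]
    {A B : Matrix m m ℂ} (hA : A.PosSemidef) (hB : B.PosSemidef) :
    0 ≤ (A * B).trace := by
  obtain ⟨X, rfl⟩ := myPsd_exists_conjTranspose_mul_self hA
  obtain ⟨Y, rfl⟩ := myPsd_exists_conjTranspose_mul_self hB
  have h : (Xᴴ * X * (Yᴴ * Y)).trace = ((X * Yᴴ)ᴴ * (X * Yᴴ)).trace := by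
    rw [Matrix.conjTranspose_mul, Matrix.conjTranspose_conjTranspose, ← Matrix.mul_assoc,
      Matrix.trace_mul_comm]
    simp only [Matrix.mul_assoc]
  rw [h]
  exact myPsd_trace_nonneg (Matrix.posSemidef_conjTranspose_mul_self _)

lemma myKron_conjTranspose {m p l q : Type*} [Fintype m] [Fintype p]
    (A : Matrix m l ℂ) (B : Matrix p q ℂ) : (A ⊗ₖ B)ᴴ = Aᴴ ⊗ₖ Bᴴ := by
  ext ⟨i, j⟩ ⟨k, l⟩
  simp [Matrix.conjTranspose_apply, Matrix.kroneckerMap_apply, mul_comm]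

lemma myKron_psd {m p : Type*} [Fintype m] [Fintype p] [DecidableEq m] [DecidableEq p]
    {A : Matrix m m ℂ} {B : Matrix p p ℂ} (hA : A.PosSemidef) (hB : B.PosSemidef) :
    (A ⊗ₖ B).PosSemidef := by
  obtain ⟨X, rfl⟩ := myPsd_exists_conjTranspose_mul_self hA
  obtain ⟨Y, rfl⟩ := myPsd_exists_conjTranspose_mul_self hB
  rw [Matrix.mul_kronecker_mul, ← myKron_conjTranspose]
  exact Matrix.posSemidef_conjTranspose_mul_self _

lemma myTrace_eq_sum_eigen {m : Type*} [Fintype m] [DecidableEq m]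
    {E : Matrix m m ℂ} (hH : E.IsHermitian) :
    E.trace = ((∑ i, hH.eigenvalues i : ℝ) : ℂ) := by
  calc E.trace = ((hH.eigenvectorUnitary : Matrix m m ℂ) *
        Matrix.diagonal (RCLike.ofReal ∘ hH.eigenvalues) *
        (star (hH.eigenvectorUnitary : Matrix m m ℂ))).trace := by
          conv_lhs => rw [hH.spectral_theorem, Unitary.conjStarAlgAut_apply]
    _ = ((star (hH.eigenvectorUnitary : Matrix m m ℂ)) *
        (hH.eigenvectorUnitary : Matrix m m ℂ) *
        Matrix.diagonal (RCLike.ofReal ∘ hH.eigenvalues)).trace := by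
          rw [Matrix.trace_mul_cycle]
    _ = (Matrix.diagonal (RCLike.ofReal ∘ hH.eigenvalues)).trace := by
          rw [Unitary.coe_star_mul_self, Matrix.one_mul]
    _ = ((∑ i, hH.eigenvalues i : ℝ) : ℂ) := by
          rw [Matrix.trace_diagonal]
          push_cast
          rfl

lemma mySub_trace_psd {m : Type*} [Fintype m] [DecidableEq m]
    {E : Matrix m m ℂ} (hE : E.PosSemidef) :
    (E.trace • (1 : Matrix m m ℂ) - E).PosSemidef := by
  have hH := hE.1
  set c : ℝ := ∑ i, hH.eigenvalues i with hc
  have htr := myTrace_eq_sum_eigen hH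
  have hkey : E.trace • (1 : Matrix m m ℂ) - E =
      (hH.eigenvectorUnitary : Matrix m m ℂ) *
        Matrix.diagonal (fun i => ((c - hH.eigenvalues i : ℝ) : ℂ)) *
        (star (hH.eigenvectorUnitary : Matrix m m ℂ)) := by
    rw [htr, ← hc]
    conv_lhs => rw [hH.spectral_theorem, Unitary.conjStarAlgAut_apply]
    have h1 : ((c : ℂ)) • (1 : Matrix m m ℂ) =
        (hH.eigenvectorUnitary : Matrix m m ℂ) * ((c : ℂ) • (1 : Matrix m m ℂ)) *
          (star (hH.eigenvectorUnitary : Matrix m m ℂ)) := by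
      rw [Matrix.mul_smul, Matrix.mul_one, Matrix.smul_mul,
        Matrix.mem_unitaryGroup_iff.mp hH.eigenvectorUnitary.2]
    rw [h1, ← Matrix.sub_mul, ← Matrix.mul_sub]
    congr 1
    congr 1
    ext i j
    by_cases h : i = j <;>
      simp [Matrix.diagonal_apply, h, Matrix.one_apply, Complex.ofReal_sub]
  rw [hkey]
  have hdiag : (Matrix.diagonal (fun i => ((c - hH.eigenvalues i : ℝ) : ℂ))).PosSemidef := by
    refine Matrix.posSemidef_diagonal_iff.mpr fun i => ?_
    rw [Complex.zero_le_real, sub_nonneg, hc]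
    exact Finset.single_le_sum (fun j _ => hE.eigenvalues_nonneg j) (Finset.mem_univ i)
  rw [Matrix.star_eq_conjTranspose]
  exact hdiag.mul_mul_conjTranspose_same _

lemma mySmul_psd {m : Type*} [Fintype m] (r : ℝ) (hr : 0 ≤ r)
    {M : Matrix m m ℂ} (hM : M.PosSemidef) : ((r : ℂ) • M).PosSemidef := by
  constructor
  · show ((r : ℂ) • M)ᴴ = (r : ℂ) • M
    rw [Matrix.conjTranspose_smul, hM.1.eq, Complex.star_def, Complex.conj_ofReal]
  · exact (hM.smul (Complex.zero_le_real.mpr hr)).2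

lemma myTrace_le_of_psd {m : Type*} [Fintype m] [DecidableEq m]
    {σ M : Matrix m m ℂ} (hσ : σ.PosSemidef) (hσ1 : σ.trace = 1)
    (c R : ℝ) (h : ((c : ℂ) • (1 : Matrix m m ℂ) - M).PosSemidef)
    (hR : (R : ℂ) = (M * σ).trace) : R ≤ c := by
  have h2 := myPsd_mul_trace_nonneg h hσ
  rw [Matrix.sub_mul, Matrix.trace_sub, Matrix.smul_mul, Matrix.one_mul, Matrix.trace_smul,
    hσ1, ← hR, smul_eq_mul, mul_one] at h2
  have h3 : (0 : ℂ) ≤ ((c - R : ℝ) : ℂ) := by push_cast; exact h2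
  linarith [Complex.zero_le_real.mp h3]

lemma myKron_sum {n d : ℕ} (A : Matrix (Fin d) (Fin d) ℂ)
    (N : Fin n → Matrix (Fin d) (Fin d) ℂ) :
    A ⊗ₖ (∑ b, N b) = ∑ b, A ⊗ₖ N b := by
  ext ⟨i, j⟩ ⟨k, l⟩
  simp [Matrix.kroneckerMap_apply, Finset.mul_sum, Matrix.sum_apply]

lemma mySum_kron {n d : ℕ} (B : Matrix (Fin d) (Fin d) ℂ)
    (N : Fin n → Matrix (Fin d) (Fin d) ℂ) :
    (∑ b, N b) ⊗ₖ B = ∑ b, N b ⊗ₖ B := by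
  ext ⟨i, j⟩ ⟨k, l⟩
  simp [Matrix.kroneckerMap_apply, Finset.sum_mul, Matrix.sum_apply]

lemma myKron_one_sub {d : ℕ} (c : ℂ) (A : Matrix (Fin d) (Fin d) ℂ) :
    c • (1 : Matrix (Fin d × Fin d) (Fin d × Fin d) ℂ) - A ⊗ₖ (1 : Matrix (Fin d) (Fin d) ℂ) =
      (c • (1 : Matrix (Fin d) (Fin d) ℂ) - A) ⊗ₖ 1 := by
  ext ⟨i, j⟩ ⟨k, l⟩
  by_cases hik : i = k <;> by_cases hjl : j = l <;>
    simp [hik, hjl, Matrix.one_apply, Prod.ext_iff, Matrix.kroneckerMap_apply]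

lemma myOne_kron_sub {d : ℕ} (c : ℂ) (B : Matrix (Fin d) (Fin d) ℂ) :
    c • (1 : Matrix (Fin d × Fin d) (Fin d × Fin d) ℂ) - (1 : Matrix (Fin d) (Fin d) ℂ) ⊗ₖ B =
      (1 : Matrix (Fin d) (Fin d) ℂ) ⊗ₖ (c • (1 : Matrix (Fin d) (Fin d) ℂ) - B) := by
  ext ⟨i, j⟩ ⟨k, l⟩
  by_cases hik : i = k <;> by_cases hjl : j = l <;>
    simp [hik, hjl, Matrix.one_apply, Prod.ext_iff, Matrix.kroneckerMap_apply]

lemma myNoisy_sum {n d : ℕ} (hd : 0 < d) (lam : ℝ)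
    (F : Fin n → Matrix (Fin d) (Fin d) ℂ) (hF : IsPOVM F) :
    ∑ b, noisyEffect lam (F b) = 1 := by
  unfold noisyEffect
  rw [Finset.sum_add_distrib, ← Finset.smul_sum, hF.2, ← Finset.sum_smul]
  have h1 : ∑ b, ((lam : ℂ) * (F b).trace / (d : ℂ)) = (lam : ℂ) := by
    rw [← Finset.sum_div, ← Finset.mul_sum, ← Matrix.trace_sum, hF.2, Matrix.trace_one]
    have hd' : ((d : ℂ)) ≠ 0 := by exact_mod_cast Nat.cast_ne_zero.mpr hd.ne'
    field_simp
    rw [Fintype.card_fin]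
  rw [h1, ← add_smul]
  push_cast
  norm_num

lemma myNoisy_psd_bound {d : ℕ} (lam : ℝ) (hlam0 : 0 ≤ lam) (hlam1 : lam < 1)
    {Ex : Matrix (Fin d) (Fin d) ℂ} (hEx : Ex.PosSemidef) :
    ((((1 - lam) * Ex.trace.re + lam * Ex.trace.re / d : ℝ) : ℂ) •
        (1 : Matrix (Fin d) (Fin d) ℂ) - noisyEffect lam Ex).PosSemidef := by
  have h0 := myPsd_trace_nonneg hEx
  have him : Ex.trace.im = 0 := (Complex.nonneg_iff.mp h0).2.symm
  have himtr : Ex.trace = ((Ex.trace.re : ℝ) : ℂ) := by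
    exact Complex.ext (by simp) (by simp [him])
  have key : (((1 - lam) * Ex.trace.re + lam * Ex.trace.re / d : ℝ) : ℂ) •
        (1 : Matrix (Fin d) (Fin d) ℂ) - noisyEffect lam Ex
      = ((1 - lam : ℝ) : ℂ) • (((Ex.trace.re : ℝ) : ℂ) • (1 : Matrix (Fin d) (Fin d) ℂ) - Ex) := by
    rw [noisyEffect, himtr]
    push_cast
    simp only [Complex.ofReal_re]
    match_scalars <;> ring
  rw [key]
  have hsub := mySub_trace_psd hEx
  rw [himtr] at hsub
  exact mySmul_psd _ (by linarith) hsub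

/-- a lower bound on the local dimension d of any noisy quantum protocol
generating P, in terms of the marginal sums of P and the normalized traces
s_x = tr(E_x)/d, t_y = tr(F_y)/d of the POVM elements. -/
theorem dimension_lower_bound_of_generates
    {n d : ℕ} (P : Matrix (Fin n) (Fin n) ℝ)
    (hpos : ∀ x y, 0 < P x y) (hsum : ∑ x, ∑ y, P x y = 1)
    (lam : ℝ) (hlam0 : 0 ≤ lam) (hlam1 : lam < 1)
    (σ : Matrix (Fin d × Fin d) (Fin d × Fin d) ℂ)
    (E F : Fin n → Matrix (Fin d) (Fin d) ℂ)
    (hσ : σ.PosSemidef) (hσ1 : σ.trace = 1) (hE : IsPOVM E) (hF : IsPOVM F)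
    (hgen : ∀ x y, (P x y : ℂ) =
      ((noisyEffect lam (E x) ⊗ₖ noisyEffect lam (F y)) * σ).trace) :
    ∀ x y : Fin n,
      (1 / (1 - lam)) *
        (max ((∑ b, P x b) / ((E x).trace.re / d))
             ((∑ a, P a y) / ((F y).trace.re / d)) - lam) ≤ (d : ℝ) := by
  intro x y
  -- d is positive
  have hd : 0 < d := by
    rcases Nat.eq_zero_or_pos d with h | h
    · subst h
      simp [Matrix.trace] at hσ1
    · exact h
  have hdr : (0 : ℝ) < (d : ℝ) := by exact_mod_cast hd
  have h1lam : (0 : ℝ) < 1 - lam := by linarith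
  -- row marginal identity
  have hrowC : ((∑ b, P x b : ℝ) : ℂ) =
      ((noisyEffect lam (E x) ⊗ₖ (1 : Matrix (Fin d) (Fin d) ℂ)) * σ).trace := by
    rw [← myNoisy_sum hd lam F hF, myKron_sum, Finset.sum_mul, Matrix.trace_sum]
    push_cast
    exact Finset.sum_congr rfl fun b _ => hgen x b
  have hcolC : ((∑ a, P a y : ℝ) : ℂ) =
      (((1 : Matrix (Fin d) (Fin d) ℂ) ⊗ₖ noisyEffect lam (F y)) * σ).trace := by
    rw [← myNoisy_sum hd lam E hE, mySum_kron, Finset.sum_mul, Matrix.trace_sum]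
    push_cast
    exact Finset.sum_congr rfl fun a _ => hgen a y
  -- bounds on the marginals
  set tE : ℝ := (E x).trace.re with htE
  set tF : ℝ := (F y).trace.re with htF
  have hrow : (∑ b, P x b) ≤ (1 - lam) * tE + lam * tE / d := by
    refine myTrace_le_of_psd hσ hσ1 _ _ ?_ hrowC
    rw [myKron_one_sub]
    exact myKron_psd (myNoisy_psd_bound lam hlam0 hlam1 (hE.1 x)) Matrix.PosSemidef.one
  have hcol : (∑ a, P a y) ≤ (1 - lam) * tF + lam * tF / d := by
    refine myTrace_le_of_psd hσ hσ1 _ _ ?_ hcolC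
    rw [myOne_kron_sub]
    exact myKron_psd Matrix.PosSemidef.one (myNoisy_psd_bound lam hlam0 hlam1 (hF.1 y))
  -- positivity of the marginals
  have hrowpos : 0 < ∑ b, P x b :=
    Finset.sum_pos (fun b _ => hpos x b) ⟨y, Finset.mem_univ y⟩
  have hcolpos : 0 < ∑ a, P a y :=
    Finset.sum_pos (fun a _ => hpos a y) ⟨x, Finset.mem_univ x⟩
  -- positivity of the traces
  have htEpos : 0 < tE := by
    by_contra hcon
    push_neg at hcon
    have h1 : lam * tE ≤ 0 := mul_nonpos_of_nonneg_of_nonpos hlam0 hcon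
    have h2 : lam * tE / d ≤ 0 := div_nonpos_iff.mpr (Or.inr ⟨h1, hdr.le⟩)
    have h3 : (1 - lam) * tE ≤ 0 := mul_nonpos_of_nonneg_of_nonpos h1lam.le hcon
    linarith
  have htFpos : 0 < tF := by
    by_contra hcon
    push_neg at hcon
    have h1 : lam * tF ≤ 0 := mul_nonpos_of_nonneg_of_nonpos hlam0 hcon
    have h2 : lam * tF / d ≤ 0 := div_nonpos_iff.mpr (Or.inr ⟨h1, hdr.le⟩)
    have h3 : (1 - lam) * tF ≤ 0 := mul_nonpos_of_nonneg_of_nonpos h1lam.le hcon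
    linarith
  -- the normalized bounds
  have ha : (∑ b, P x b) / (tE / d) ≤ (1 - lam) * d + lam := by
    rw [div_le_iff₀ (by positivity)]
    have : ((1 - lam) * d + lam) * (tE / d) = (1 - lam) * tE + lam * tE / d := by
      field_simp
    rw [this]
    exact hrow
  have hb : (∑ a, P a y) / (tF / d) ≤ (1 - lam) * d + lam := by
    rw [div_le_iff₀ (by positivity)]
    have : ((1 - lam) * d + lam) * (tF / d) = (1 - lam) * tF + lam * tF / d := by
      field_simp
    rw [this]
    exact hcol
  have hmax : max ((∑ b, P x b) / (tE / d)) ((∑ a, P a y) / (tF / d)) ≤ (1 - lam) * d + lam :=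
    max_le ha hb
  calc (1 / (1 - lam)) * (max ((∑ b, P x b) / (tE / d)) ((∑ a, P a y) / (tF / d)) - lam)
      ≤ (1 / (1 - lam)) * ((1 - lam) * d + lam - lam) := by
        have h0 : (0:ℝ) ≤ 1 / (1 - lam) := by positivity
        exact mul_le_mul_of_nonneg_left (sub_le_sub_right hmax lam) h0
    _ = d := by field_simp; ring
end
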